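/- Let ρ be a state on a finite-dimensional Hilbert space and Π an orthogonal projection, with Π⊥ = 1 − Π. Then P(ρ, ΠρΠ) ≤ √( 2 Tr(ρΠ⊥) − (Tr(ρΠ⊥))² ). -/

import Mathlib

open scoped Matrix Kronecker BigOperators
open Matrix
open scoped ComplexOrder Classical

namespace Paper

/-- Total positive semidefinite square root (junk value `0` off the PSD cone). -/
noncomputable def psqrt {n : Type*} [Fintype n] [DecidableEq n] (A : Matrix n n ℂ) :
    Matrix n n ℂ :=
  if h : A.PosSemidef then
    (h.1.eigenvectorUnitary : Matrix n n ℂ) *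
      Matrix.diagonal (fun i => ((Real.sqrt (h.1.eigenvalues i) : ℝ) : ℂ)) *
      (star (h.1.eigenvectorUnitary : Matrix n n ℂ))
  else 0

/-- Trace norm `‖A‖₁ = Tr √(AᴴA)`. -/
noncomputable def traceNorm {n : Type*} [Fintype n] [DecidableEq n] (A : Matrix n n ℂ) : ℝ :=
  (psqrt (Aᴴ * A)).trace.re

/-- Fidelity `F(ρ,σ) = ‖√ρ√σ‖₁` of positive semidefinite matrices. -/
noncomputable def fidelity {n : Type*} [Fintype n] [DecidableEq n] (ρ σ : Matrix n n ℂ) : ℝ :=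
  traceNorm (psqrt ρ * psqrt σ)

/-- Purified distance `P(ρ,σ) = √(1 - F(ρ,σ)²)`. -/
noncomputable def purDist {n : Type*} [Fintype n] [DecidableEq n] (ρ σ : Matrix n n ℂ) : ℝ :=
  Real.sqrt (1 - fidelity ρ σ ^ 2)

/-- A state (density matrix): positive semidefinite with unit trace. -/
def IsState {n : Type*} [Fintype n] (ρ : Matrix n n ℂ) : Prop :=
  ρ.PosSemidef ∧ ρ.trace = 1

/-- A probability mass function on a finite alphabet. -/
def IsPMF {X : Type*} [Fintype X] (p : X → ℝ) : Prop :=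
  (∀ x, 0 ≤ p x) ∧ ∑ x, p x = 1

/-- Support inclusion `supp ρ ⊆ supp σ`, phrased via kernels (equivalent for PSD matrices). -/
def SuppSubset {n : Type*} [Fintype n] (ρ σ : Matrix n n ℂ) : Prop :=
  ∀ v : n → ℂ, σ.mulVec v = 0 → ρ.mulVec v = 0

/-- Loewner order `A ≤ B`. -/
def LLE {n : Type*} [Fintype n] (A B : Matrix n n ℂ) : Prop := (B - A).PosSemidef

/-- Binary logarithm of a Hermitian matrix, taken on its support via functional calculus
(`Real.logb 2 0 = 0` takes care of the kernel). -/
noncomputable def matLog {n : Type*} [Fintype n] [DecidableEq n] (A : Matrix n n ℂ) :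
    Matrix n n ℂ :=
  if hA : A.IsHermitian then
    (hA.eigenvectorUnitary : Matrix n n ℂ) *
      Matrix.diagonal (fun i => (Real.logb 2 (hA.eigenvalues i) : ℂ)) *
      (star (hA.eigenvectorUnitary : Matrix n n ℂ))
  else 0

/-- Quantum relative entropy (base 2): `D(ρ‖σ) = Tr(ρ log₂ ρ) - Tr(ρ log₂ σ)`. -/
noncomputable def relEnt {n : Type*} [Fintype n] [DecidableEq n] (ρ σ : Matrix n n ℂ) : ℝ :=
  ((ρ * matLog ρ).trace - (ρ * matLog σ).trace).re

/-- Max-relative entropy `D_max(ρ‖σ) = inf {λ | ρ ≤ 2^λ σ}`. -/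
noncomputable def dMax {n : Type*} [Fintype n] (ρ σ : Matrix n n ℂ) : ℝ :=
  sInf {l : ℝ | LLE ρ ((2 : ℝ) ^ l • σ)}

/-- Smooth max-relative entropy `D_max^ε(ρ‖σ) = min_{ρ' ∈ B^ε(ρ)} D_max(ρ'‖σ)`. -/
noncomputable def dMaxSmooth {n : Type*} [Fintype n] [DecidableEq n]
    (ε : ℝ) (ρ σ : Matrix n n ℂ) : ℝ :=
  sInf {d : ℝ | ∃ ρ' : Matrix n n ℂ, IsState ρ' ∧ purDist ρ' ρ ≤ ε ∧ d = dMax ρ' σ}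

/-- Partial trace over the second (B) factor. -/
noncomputable def ptraceB {a b : Type*} [Fintype b]
    (M : Matrix (a × b) (a × b) ℂ) : Matrix a a ℂ :=
  Matrix.of fun i j => ∑ k : b, M (i, k) (j, k)

/-- Partial trace over the first (A) factor. -/
noncomputable def ptraceA {a b : Type*} [Fintype a]
    (M : Matrix (a × b) (a × b) ℂ) : Matrix b b ℂ :=
  Matrix.of fun i j => ∑ k : a, M (k, i) (k, j)

/-- The cq state `Σ_x p(x) |x⟩⟨x| ⊗ ρ_x`. -/
noncomputable def cqState {X d : Type*} [Fintype X] [DecidableEq X] [Fintype d] [DecidableEq d]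
    (p : X → ℝ) (ρ : X → Matrix d d ℂ) : Matrix (X × d) (X × d) ℂ :=
  ∑ x, p x • (Matrix.single x x (1 : ℂ) ⊗ₖ ρ x)

/-- The Markov state `ρ^{A-X-B} = Σ_x p(x)|x⟩⟨x| ⊗ ρ_x^A ⊗ ρ_x^B` of a cq state. -/
noncomputable def markovState {X a b : Type*} [Fintype X] [DecidableEq X]
    [Fintype a] [DecidableEq a] [Fintype b] [DecidableEq b]
    (p : X → ℝ) (ρ : X → Matrix (a × b) (a × b) ℂ) :
    Matrix (X × (a × b)) (X × (a × b)) ℂ :=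
  cqState p fun x => ptraceB (ρ x) ⊗ₖ ptraceA (ρ x)

/-- Conditional mutual information `I(A;B|X)_ρ = D(ρ^{XAB} ‖ ρ^{A-X-B})` of a cq state. -/
noncomputable def condMI {X a b : Type*} [Fintype X] [DecidableEq X]
    [Fintype a] [DecidableEq a] [Fintype b] [DecidableEq b]
    (p : X → ℝ) (ρ : X → Matrix (a × b) (a × b) ℂ) : ℝ :=
  relEnt (cqState p ρ) (markovState p ρ)

/-- `D_max^ε(A;B|X)_ρ = D_max^ε(ρ^{XAB} ‖ ρ^{A-X-B})` of a cq state. -/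
noncomputable def condDmaxSmooth {X a b : Type*} [Fintype X] [DecidableEq X]
    [Fintype a] [DecidableEq a] [Fintype b] [DecidableEq b]
    (ε : ℝ) (p : X → ℝ) (ρ : X → Matrix (a × b) (a × b) ℂ) : ℝ :=
  dMaxSmooth ε (cqState p ρ) (markovState p ρ)

/-- `Ĩ_max^ε(A;B|X)_ρ`: minimum of `D_max(ρ' ‖ Σ_x p'(x)|x⟩⟨x| ⊗ ρ'^A_x ⊗ ρ^B_x)` over
cq states `ρ'` in the ε-ball around `ρ^{XAB}`. -/
noncomputable def condImaxTilde {X a b : Type*} [Fintype X] [DecidableEq X]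
    [Fintype a] [DecidableEq a] [Fintype b] [DecidableEq b]
    (ε : ℝ) (p : X → ℝ) (ρ : X → Matrix (a × b) (a × b) ℂ) : ℝ :=
  sInf {d : ℝ | ∃ (p' : X → ℝ) (ρ' : X → Matrix (a × b) (a × b) ℂ),
    IsPMF p' ∧ (∀ x, IsState (ρ' x)) ∧
    purDist (cqState p' ρ') (cqState p ρ) ≤ ε ∧
    d = dMax (cqState p' ρ') (cqState p' fun x => ptraceB (ρ' x) ⊗ₖ ptraceA (ρ x))}

/-- `Ĩ_max^ε(A;B)_ρ = inf_{ρ' ∈ B^ε(ρ)} D_max(ρ' ‖ ρ'^A ⊗ ρ^B)` for a bipartite state. -/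
noncomputable def bipImaxTilde {a b : Type*} [Fintype a] [DecidableEq a]
    [Fintype b] [DecidableEq b] (ε : ℝ) (ρ : Matrix (a × b) (a × b) ℂ) : ℝ :=
  sInf {d : ℝ | ∃ ρ' : Matrix (a × b) (a × b) ℂ, IsState ρ' ∧ purDist ρ' ρ ≤ ε ∧
    d = dMax ρ' (ptraceB ρ' ⊗ₖ ptraceA ρ)}

/-- The binary entropy function. -/
noncomputable def binEnt (ε : ℝ) : ℝ :=
  -(ε * Real.logb 2 ε) - (1 - ε) * Real.logb 2 (1 - ε)

/-- Hypothesis testing relative entropy `D_H^ε(ρ‖σ)`. -/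
noncomputable def dH {n : Type*} [Fintype n] [DecidableEq n] (ε : ℝ) (ρ σ : Matrix n n ℂ) : ℝ :=
  sSup {d : ℝ | ∃ Λ : Matrix n n ℂ, Λ.PosSemidef ∧ (1 - Λ).PosSemidef ∧
    1 - ε ≤ ((Λ * ρ).trace).re ∧ d = -Real.logb 2 (((Λ * σ).trace).re)}

/-- The convex-split state
`τ^{XAB₁…Bₙ} = Σ_x p(x)|x⟩⟨x| ⊗ (1/n) Σ_j ρ_x^{AB_j} ⊗ (⊗_{i≠j} σ_x^{B_i})`,
written entrywise on the index type `X × (A × Bⁿ)`. -/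
noncomputable def tauState {X a b : Type*} [Fintype X] [DecidableEq X]
    [Fintype a] [Fintype b]
    (p : X → ℝ) (ρ : X → Matrix (a × b) (a × b) ℂ) (σ : X → Matrix b b ℂ) (nn : ℕ) :
    Matrix (X × (a × (Fin nn → b))) (X × (a × (Fin nn → b))) ℂ :=
  Matrix.of fun q q' =>
    (if q.1 = q'.1 then (p q.1 : ℂ) else 0) *
      ((nn : ℂ)⁻¹ * ∑ j : Fin nn,
        ρ q.1 (q.2.1, q.2.2 j) (q'.2.1, q'.2.2 j) *
          ∏ i ∈ Finset.univ.erase j, σ q.1 (q.2.2 i) (q'.2.2 i))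

/-- The product reference state
`Σ_x p(x)|x⟩⟨x| ⊗ ρ_x^A ⊗ σ_x^{B₁} ⊗ … ⊗ σ_x^{Bₙ}`, entrywise. -/
noncomputable def refState {X a b : Type*} [Fintype X] [DecidableEq X]
    [Fintype a] [Fintype b]
    (p : X → ℝ) (ρ : X → Matrix (a × b) (a × b) ℂ) (σ : X → Matrix b b ℂ) (nn : ℕ) :
    Matrix (X × (a × (Fin nn → b))) (X × (a × (Fin nn → b))) ℂ :=
  Matrix.of fun q q' =>
    (if q.1 = q'.1 then (p q.1 : ℂ) else 0) *
      (ptraceB (ρ q.1) q.2.1 q'.2.1 * ∏ i : Fin nn, σ q.1 (q.2.2 i) (q'.2.2 i))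

section psqrtAux
open scoped MatrixOrder

lemma psqrt_eq_cfc {n : Type*} [Fintype n] [DecidableEq n] {A : Matrix n n ℂ}
    (h : A.PosSemidef) : psqrt A = cfc Real.sqrt A := by
  rw [psqrt, dif_pos h, h.1.cfc_eq, IsHermitian.cfc, Unitary.conjStarAlgAut_apply]
  rfl

lemma spec_nonneg_aux {n : Type*} [Fintype n] [DecidableEq n] {A : Matrix n n ℂ}
    (h : A.PosSemidef) {x : ℝ} (hx : x ∈ spectrum ℝ A) : 0 ≤ x := by
  rw [h.1.spectrum_real_eq_range_eigenvalues] at hx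
  obtain ⟨i, rfl⟩ := hx
  exact h.eigenvalues_nonneg i

lemma psqrt_posSemidef {n : Type*} [Fintype n] [DecidableEq n] {A : Matrix n n ℂ}
    (h : A.PosSemidef) : (psqrt A).PosSemidef := by
  rw [psqrt_eq_cfc h, ← nonneg_iff_posSemidef]
  exact cfc_nonneg (fun x _ => Real.sqrt_nonneg x)

lemma psqrt_mul_self {n : Type*} [Fintype n] [DecidableEq n] {A : Matrix n n ℂ}
    (h : A.PosSemidef) : psqrt A * psqrt A = A := by
  have hA : IsSelfAdjoint A := h.1
  rw [psqrt_eq_cfc h, ← cfc_mul Real.sqrt Real.sqrt A]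
  conv_rhs => rw [← cfc_id' ℝ A]
  exact cfc_congr (fun x hx => Real.mul_self_sqrt (spec_nonneg_aux h hx))

lemma psqrt_mul_self_eq {n : Type*} [Fintype n] [DecidableEq n] {B : Matrix n n ℂ}
    (h : B.PosSemidef) (h2 : (B * B).PosSemidef) : psqrt (B * B) = B := by
  have hB : IsSelfAdjoint B := h.1
  rw [psqrt_eq_cfc h2]
  have e : B * B = cfc (fun x : ℝ => x * x) B := by
    rw [cfc_mul (fun x : ℝ => x) (fun x : ℝ => x) B, cfc_id' ℝ B]
  rw [e, ← cfc_comp Real.sqrt (fun x : ℝ => x * x) B]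
  conv_rhs => rw [← cfc_id' ℝ B]
  exact cfc_congr (fun x hx => Real.sqrt_mul_self (spec_nonneg_aux h hx))

end psqrtAux

/-- `P(ρ, ΠρΠ) ≤ √(2 Tr(ρΠ⊥) − (Tr(ρΠ⊥))²)`. -/
theorem purDist_projection {d : Type*} [Fintype d] [DecidableEq d]
    (ρ : Matrix d d ℂ) (hρ : IsState ρ)
    (Q : Matrix d d ℂ) (hQ : Q.IsHermitian) (hQ2 : Q * Q = Q) :
    purDist ρ (Q * ρ * Q) ≤
      Real.sqrt (2 * ((ρ * (1 - Q)).trace).re - ((ρ * (1 - Q)).trace).re ^ 2) := by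
  obtain ⟨hρP, hρtr⟩ := hρ
  have hσ : (Q * ρ * Q).PosSemidef := by
    have h := hρP.mul_mul_conjTranspose_same Q
    rwa [hQ.eq] at h
  set σ : Matrix d d ℂ := Q * ρ * Q with hσdef
  set s : Matrix d d ℂ := psqrt σ with hs
  have hsP : s.PosSemidef := psqrt_posSemidef hσ
  have hss : s * s = σ := psqrt_mul_self hσ
  have hQσ : Q * σ = σ := by
    rw [hσdef, ← Matrix.mul_assoc, ← Matrix.mul_assoc, hQ2]
  have hσQ : σ * Q = σ := by
    rw [hσdef, Matrix.mul_assoc, hQ2]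
  -- (1 - Q) * σ * (1 - Q) = 0, hence s * (1 - Q) = 0
  have hsR : s * (1 - Q) = 0 := by
    have h0 : (s * (1 - Q))ᴴ * (s * (1 - Q)) = 0 := by
      have hRH : (1 - Q)ᴴ = 1 - Q := by
        rw [conjTranspose_sub, conjTranspose_one, hQ.eq]
      calc (s * (1 - Q))ᴴ * (s * (1 - Q))
          = (1 - Q) * (s * s) * (1 - Q) := by
            rw [conjTranspose_mul, hRH, hsP.1]
            noncomm_ring
        _ = 0 := by
            rw [hss]
            have : (1 - Q) * σ = 0 := by
              rw [Matrix.sub_mul, Matrix.one_mul, hQσ, sub_self]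
            rw [Matrix.mul_assoc, Matrix.mul_sub, Matrix.mul_one, hσQ, sub_self,
              Matrix.mul_zero]
    exact Matrix.conjTranspose_mul_self_eq_zero.mp h0
  have hsQ : s * Q = s := by
    have := hsR
    rwa [Matrix.mul_sub, Matrix.mul_one, sub_eq_zero, eq_comm] at this
  have hQs : Q * s = s := by
    calc Q * s = (s * Q)ᴴ := by rw [conjTranspose_mul, hQ.eq, hsP.1]
    _ = s := by rw [hsQ, hsP.1]
  set r : Matrix d d ℂ := psqrt ρ with hr
  have hrP : r.PosSemidef := psqrt_posSemidef hρP
  have hrr : r * r = ρ := psqrt_mul_self hρP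
  -- (r*s)ᴴ * (r*s) = σ * σ
  have hkey : (r * s)ᴴ * (r * s) = σ * σ := by
    calc (r * s)ᴴ * (r * s) = s * (r * r) * s := by
          rw [conjTranspose_mul, hsP.1, hrP.1]; noncomm_ring
      _ = (Q * s)ᴴ * ρ * (Q * s) := by rw [hQs, hsP.1, hrr]
      _ = s * σ * s := by
          rw [conjTranspose_mul, hsP.1, hQ.eq, hσdef]; noncomm_ring
      _ = σ * σ := by rw [← hss]; noncomm_ring
  have hσ2 : (σ * σ).PosSemidef := by
    have := hσ.pow 2
    rwa [pow_two] at this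
  have hsqrtσ2 : psqrt (σ * σ) = σ := by
    exact psqrt_mul_self_eq hσ hσ2
  -- fidelity ρ σ = Re Tr σ
  have hfid : fidelity ρ σ = σ.trace.re := by
    have h1 : psqrt ρ = r := hr.symm
    have h2 : psqrt σ = s := hs.symm
    rw [fidelity, traceNorm, h1, h2, hkey, hsqrtσ2]
  -- trace bookkeeping
  have htrσ : σ.trace = (ρ * Q).trace := by
    rw [hσdef, Matrix.trace_mul_comm, ← Matrix.mul_assoc, hQ2, Matrix.trace_mul_comm]
  set ε : ℝ := ((ρ * (1 - Q)).trace).re with hε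
  have htrε : σ.trace.re = 1 - ε := by
    have : (ρ * (1 - Q)).trace = 1 - σ.trace := by
      rw [Matrix.mul_sub, Matrix.mul_one, Matrix.trace_sub, hρtr, htrσ]
    rw [hε, this]
    simp
  have hF : fidelity ρ σ = 1 - ε := by rw [hfid, htrε]
  rw [purDist, hF]
  apply Real.sqrt_le_sqrt
  ring_nf
  exact le_refl _


end Paper
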